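/- Let (Y_n) be non-negative random variables adapted to a filtration, c > 0, and suppose E[Y_{n+1} | F_n] ≤ (1 - c·γ_n) Y_n + c₃·γ_n² for all n ≥ N, where γ_n = Θ(n^{-θ}) with θ ∈ (1/2, 1) and c₃ ≥ 0. Then for any η ∈ (2 - 2θ, 1), the sequence of expectations satisfies E[Y_n] ∈ o(n^{-(1-η)}), i.e., n^{1-η}·E[Y_n] → 0 as n → ∞. -/

import Mathlib

open Filter MeasureTheory

/-- If partial sums of a nonneg non-summable minorant diverge, partial sums of `d` diverge. -/
lemma aux_sum_tendsto_atTop (g d : ℕ → ℝ) (hg : ¬ Summable g)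
    (h : ∀ᶠ n in atTop, 0 ≤ g n ∧ g n ≤ d n) :
    Tendsto (fun n => ∑ k ∈ Finset.range n, d k) atTop atTop := by
  obtain ⟨K, hK⟩ := eventually_atTop.1 h
  set d' : ℕ → ℝ := fun k => d (K + k) with hd'
  set g' : ℕ → ℝ := fun k => g (K + k) with hg'
  have hg'0 : ∀ k, 0 ≤ g' k := fun k => (hK (K + k) (Nat.le_add_right _ _)).1
  have hg'le : ∀ k, g' k ≤ d' k := fun k => (hK (K + k) (Nat.le_add_right _ _)).2
  have hg'ns : ¬ Summable g' := by
    intro hs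
    apply hg
    have : Summable (fun n => g (n + K)) := by
      apply hs.congr
      intro k; simp [hg', Nat.add_comm]
    exact (summable_nat_add_iff K).mp this
  have hd'ns : ¬ Summable d' := fun hs => hg'ns (hs.of_nonneg_of_le hg'0 hg'le)
  have hd'0 : ∀ k, 0 ≤ d' k := fun k => le_trans (hg'0 k) (hg'le k)
  have hT : Tendsto (fun n => ∑ k ∈ Finset.range n, d' k) atTop atTop :=
    (not_summable_iff_tendsto_nat_atTop_of_nonneg hd'0).mp hd'ns
  have hT2 : Tendsto (fun n : ℕ => (∑ k ∈ Finset.range K, d k) +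
      ∑ k ∈ Finset.range (n - K), d' k) atTop atTop :=
    tendsto_atTop_add_const_left _ _ (hT.comp (tendsto_sub_atTop_nat K))
  apply hT2.congr'
  filter_upwards [eventually_ge_atTop K] with n hn
  rw [← Finset.sum_Ico_eq_sum_range, Finset.range_eq_Ico, Finset.range_eq_Ico]
  exact Finset.sum_Ico_consecutive d (Nat.zero_le K) hn

/-- Deterministic Robbins–Siegmund type lemma. -/
lemma aux_det (a d e : ℕ → ℝ) (ha : ∀ n, 0 ≤ a n)
    (hd : ∀ᶠ n in atTop, 0 ≤ d n ∧ d n ≤ 1)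
    (hrec : ∀ᶠ n in atTop, a (n+1) ≤ (1 - d n) * a n + e n)
    (hdiv : Tendsto (fun n => ∑ k ∈ Finset.range n, d k) atTop atTop)
    (hsmall : ∀ ε : ℝ, 0 < ε → ∀ᶠ n in atTop, e n ≤ ε * d n) :
    Tendsto a atTop (nhds 0) := by
  rw [Metric.tendsto_atTop]
  intro ε hε
  have hε2 : 0 < ε / 2 := by linarith
  obtain ⟨M, hM⟩ := eventually_atTop.1 ((hd.and hrec).and (hsmall (ε/2) hε2))
  set v : ℕ → ℝ := fun n => max (a n - ε/2) 0 with hv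
  have hv0 : ∀ n, 0 ≤ v n := fun n => le_max_right _ _
  have key : ∀ k, v (M + k) ≤ v M * Real.exp (-(∑ j ∈ Finset.range k, d (M + j))) := by
    intro k
    induction k with
    | zero => simp
    | succ k ih =>
      have hn := hM (M + k) (Nat.le_add_right _ _)
      obtain ⟨⟨⟨hd0, hd1⟩, hr⟩, hsm⟩ := hn
      have h1 : a (M + k + 1) - ε/2 ≤ (1 - d (M + k)) * (a (M + k) - ε/2) := by
        nlinarith
      have h2 : v (M + k + 1) ≤ (1 - d (M + k)) * v (M + k) := by
        have h3 : v (M + k + 1) ≤ max ((1 - d (M + k)) * (a (M + k) - ε/2)) 0 :=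
          max_le_max h1 le_rfl
        have h4 : (1 - d (M + k)) * v (M + k) = max ((1 - d (M + k)) * (a (M + k) - ε/2)) 0 := by
          rw [hv, mul_max_of_nonneg _ _ (by linarith : (0:ℝ) ≤ 1 - d (M + k)), mul_zero]
        rw [h4]; exact h3
      calc v (M + (k + 1)) = v (M + k + 1) := by ring_nf
        _ ≤ (1 - d (M + k)) * v (M + k) := h2
        _ ≤ Real.exp (-(d (M + k))) * (v M * Real.exp (-(∑ j ∈ Finset.range k, d (M + j)))) := by
            apply mul_le_mul _ ih (hv0 _) (Real.exp_nonneg _)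
            linarith [Real.add_one_le_exp (-(d (M + k)))]
        _ = v M * Real.exp (-(∑ j ∈ Finset.range (k+1), d (M + j))) := by
            rw [Finset.sum_range_succ, neg_add, Real.exp_add]; ring
  have hS : Tendsto (fun k => ∑ j ∈ Finset.range k, d (M + j)) atTop atTop := by
    have h1 : Tendsto (fun k => (∑ i ∈ Finset.range (M + k), d i)
        - ∑ i ∈ Finset.range M, d i) atTop atTop := by
      apply tendsto_atTop_add_const_right
      exact hdiv.comp (by simpa [Nat.add_comm] using tendsto_add_atTop_nat M)
    apply h1.congr
    intro k
    rw [← Finset.sum_Ico_eq_sub _ (Nat.le_add_right M k), Finset.sum_Ico_eq_sum_range]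
    simp
  have hexp : Tendsto (fun k => v M * Real.exp (-(∑ j ∈ Finset.range k, d (M + j))))
      atTop (nhds 0) := by
    rw [show (0:ℝ) = v M * 0 by ring]
    exact (Real.tendsto_exp_atBot.comp (tendsto_neg_atTop_atBot.comp hS)).const_mul _
  obtain ⟨K, hKlt⟩ := eventually_atTop.1 (hexp.eventually_lt_const hε2)
  refine ⟨M + K, fun n hn => ?_⟩
  have hk : n = M + (n - M) := by omega
  have hKle : K ≤ n - M := by omega
  have hvlt : v n < ε / 2 := by
    rw [hk]
    exact lt_of_le_of_lt (key (n - M)) (hKlt _ hKle)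
  have han : a n < ε := by
    have : a n - ε/2 ≤ v n := le_max_left _ _
    linarith
  rw [Real.dist_eq, sub_zero, abs_of_nonneg (ha n)]
  exact han

theorem stmt_18 {Ω : Type*} {m0 : MeasurableSpace Ω} (μ : Measure Ω) [IsProbabilityMeasure μ]
    (ℱ : Filtration ℕ m0) (Y : ℕ → Ω → ℝ) (γ : ℕ → ℝ) (c c₃ θ : ℝ) (N : ℕ)
    (hc : 0 < c) (hc₃ : 0 ≤ c₃) (hθ : 1/2 < θ ∧ θ < 1)
    (hγΘ : ∃ C₁ C₂ : ℝ, 0 < C₁ ∧ 0 < C₂ ∧ ∀ n : ℕ, 1 ≤ n →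
      C₁ * (n : ℝ) ^ (-θ) ≤ γ n ∧ γ n ≤ C₂ * (n : ℝ) ^ (-θ))
    (hY : ∀ n ω, 0 ≤ Y n ω) (hYad : Adapted ℱ Y) (hint : ∀ n, Integrable (Y n) μ)
    (hrec : ∀ n : ℕ, N ≤ n → ∀ᵐ ω ∂μ,
      (μ[Y (n+1) | ℱ n]) ω ≤ (1 - c * γ n) * Y n ω + c₃ * γ n ^ 2) :
    ∀ η : ℝ, 2 - 2*θ < η → η < 1 →
      Tendsto (fun n : ℕ => (n : ℝ) ^ (1 - η) * ∫ ω, Y n ω ∂μ) atTop (nhds 0) := by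
  intro η hη1 hη2
  obtain ⟨C₁, C₂, hC₁, hC₂, hγ⟩ := hγΘ
  obtain ⟨hθ1, hθ2⟩ := hθ
  set p : ℝ := 1 - η with hp
  have hp0 : 0 < p := by rw [hp]; linarith
  have hp1 : p < 1 := by rw [hp]; nlinarith
  set A : ℕ → ℝ := fun n => ∫ ω, Y n ω ∂μ with hA
  have hA0 : ∀ n, 0 ≤ A n := fun n => integral_nonneg (fun ω => hY n ω)
  -- recursion on expectations
  have hArec : ∀ n, N ≤ n → A (n+1) ≤ (1 - c * γ n) * A n + c₃ * γ n ^ 2 := by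
    intro n hn
    have h2 : Integrable (fun ω => (1 - c * γ n) * Y n ω + c₃ * γ n ^ 2) μ :=
      ((hint n).const_mul _).add (integrable_const _)
    calc A (n+1) = ∫ ω, (μ[Y (n+1)|ℱ n]) ω ∂μ := (integral_condExp (ℱ.le n)).symm
      _ ≤ ∫ ω, ((1 - c * γ n) * Y n ω + c₃ * γ n ^ 2) ∂μ :=
          integral_mono_ae integrable_condExp h2 (hrec n hn)
      _ = (1 - c * γ n) * A n + c₃ * γ n ^ 2 := by
          rw [integral_add ((hint n).const_mul _) (integrable_const _), integral_const_mul,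
            integral_const]
          simp [hA]
  -- basic positivity of γ
  have hγpos : ∀ n : ℕ, 1 ≤ n → 0 < γ n := by
    intro n hn
    have h0 : (0:ℝ) < (n:ℝ) := by exact_mod_cast Nat.lt_of_lt_of_le Nat.zero_lt_one hn
    exact lt_of_lt_of_le (by positivity) (hγ n hn).1
  -- γ is eventually small
  have hrpow0 : ∀ q : ℝ, 0 < q → Tendsto (fun n : ℕ => (n:ℝ) ^ (-q)) atTop (nhds 0) :=
    fun q hq => (tendsto_rpow_neg_atTop hq).comp tendsto_natCast_atTop_atTop
  have Esmall : ∀ᶠ n in atTop, c * γ n ≤ 1/2 := by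
    have h1 : Tendsto (fun n : ℕ => c * C₂ * (n:ℝ) ^ (-θ)) atTop (nhds 0) := by
      simpa using ((hrpow0 θ (by linarith)).const_mul (c * C₂))
    filter_upwards [h1.eventually_lt_const (by norm_num : (0:ℝ) < 1/2),
      eventually_ge_atTop 1] with n h1n h2n
    have := (hγ n h2n).2
    nlinarith
  have Einv : ∀ᶠ n in atTop, (1:ℝ) ≤ c/2 * γ n * (n:ℝ) := by
    have h1 : Tendsto (fun n : ℕ => (n:ℝ) ^ (1 - θ)) atTop atTop :=
      (tendsto_rpow_atTop (by linarith)).comp tendsto_natCast_atTop_atTop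
    filter_upwards [h1.eventually_ge_atTop (2 / (c * C₁)), eventually_ge_atTop 1] with n h1n h2n
    have h0 : (0:ℝ) < (n:ℝ) := by exact_mod_cast Nat.lt_of_lt_of_le Nat.zero_lt_one h2n
    have hmul : (n:ℝ) ^ (-θ) * (n:ℝ) = (n:ℝ) ^ (1 - θ) := by
      rw [show (1:ℝ) - θ = -θ + 1 by ring, Real.rpow_add h0, Real.rpow_one]
    have hγn := (hγ n h2n).1
    have hrn : (0:ℝ) ≤ (n:ℝ) ^ (-θ) := Real.rpow_nonneg h0.le _
    have h2 : 2 / (c * C₁) ≤ (n:ℝ) ^ (-θ) * (n:ℝ) := by rw [hmul]; exact h1n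
    have hcC : 0 < c * C₁ := by positivity
    rw [div_le_iff₀ hcC] at h2
    nlinarith [mul_le_mul_of_nonneg_right hγn h0.le]
  -- the key ratio inequality
  have Eratio : ∀ᶠ n in atTop,
      (1 - c * γ n) * ((n:ℝ) + 1) ^ p ≤ (1 - c/2 * γ n) * (n:ℝ) ^ p := by
    filter_upwards [eventually_ge_atTop 1, Esmall, Einv] with n hn1 h1 h2
    have hn0 : (0:ℝ) < (n:ℝ) := by exact_mod_cast Nat.lt_of_lt_of_le Nat.zero_lt_one hn1
    have hγ0 : 0 ≤ γ n := (hγpos n hn1).le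
    have hb : (1:ℝ) ≤ ((n:ℝ) + 1) / n := by rw [le_div_iff₀ hn0]; linarith
    have hs : (((n:ℝ) + 1) / n) ^ p ≤ ((n:ℝ) + 1) / n := by
      calc (((n:ℝ) + 1) / n) ^ p ≤ (((n:ℝ) + 1) / n) ^ (1:ℝ) :=
            Real.rpow_le_rpow_of_exponent_le hb hp1.le
        _ = ((n:ℝ) + 1) / n := Real.rpow_one _
    have hsplit : ((n:ℝ) + 1) ^ p = (n:ℝ) ^ p * (((n:ℝ) + 1) / n) ^ p := by
      rw [← Real.mul_rpow hn0.le (by positivity)]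
      congr 1
      field_simp
    have hnp : (0:ℝ) ≤ (n:ℝ) ^ p := Real.rpow_nonneg hn0.le _
    have key : (1 - c * γ n) * (((n:ℝ) + 1) / n) ≤ 1 - c/2 * γ n := by
      rw [← mul_div_assoc, div_le_iff₀ hn0]
      nlinarith
    calc (1 - c * γ n) * ((n:ℝ) + 1) ^ p
        = (1 - c * γ n) * ((n:ℝ) ^ p * (((n:ℝ) + 1) / n) ^ p) := by rw [hsplit]
      _ ≤ (1 - c * γ n) * ((n:ℝ) ^ p * (((n:ℝ) + 1) / n)) := by
          apply mul_le_mul_of_nonneg_left (mul_le_mul_of_nonneg_left hs hnp)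
          linarith
      _ = (n:ℝ) ^ p * ((1 - c * γ n) * (((n:ℝ) + 1) / n)) := by ring
      _ ≤ (n:ℝ) ^ p * (1 - c/2 * γ n) := mul_le_mul_of_nonneg_left key hnp
      _ = (1 - c/2 * γ n) * (n:ℝ) ^ p := mul_comm _ _
  -- apply the deterministic lemma
  apply aux_det (fun n => (n:ℝ) ^ p * A n) (fun n => c/2 * γ n)
    (fun n => c₃ * ((n:ℝ) + 1) ^ p * γ n ^ 2)
  · intro n
    exact mul_nonneg (Real.rpow_nonneg (Nat.cast_nonneg n) _) (hA0 n)
  · filter_upwards [eventually_ge_atTop 1, Esmall] with n hn1 h1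
    have hγ0 := (hγpos n hn1).le
    constructor
    · positivity
    · nlinarith
  · -- the recursion for the weighted sequence
    filter_upwards [eventually_ge_atTop 1, eventually_ge_atTop N, Esmall, Eratio]
      with n hn1 hnN h1 hr
    have hγ0 := (hγpos n hn1).le
    have hnp1 : (0:ℝ) ≤ ((n:ℝ) + 1) ^ p := Real.rpow_nonneg (by positivity) _
    have hcast : ((n+1 : ℕ) : ℝ) = (n:ℝ) + 1 := by push_cast; ring
    show ((n+1 : ℕ) : ℝ) ^ p * A (n+1) ≤ _
    rw [hcast]
    calc ((n:ℝ) + 1) ^ p * A (n+1)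
        ≤ ((n:ℝ) + 1) ^ p * ((1 - c * γ n) * A n + c₃ * γ n ^ 2) :=
          mul_le_mul_of_nonneg_left (hArec n hnN) hnp1
      _ = (1 - c * γ n) * ((n:ℝ) + 1) ^ p * A n + c₃ * ((n:ℝ) + 1) ^ p * γ n ^ 2 := by ring
      _ ≤ (1 - c/2 * γ n) * (n:ℝ) ^ p * A n + c₃ * ((n:ℝ) + 1) ^ p * γ n ^ 2 := by
          have := mul_le_mul_of_nonneg_right hr (hA0 n)
          linarith
      _ = (1 - c/2 * γ n) * ((n:ℝ) ^ p * A n) + c₃ * ((n:ℝ) + 1) ^ p * γ n ^ 2 := by ring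
  · -- divergence of the sums
    apply aux_sum_tendsto_atTop (fun n => c/2 * C₁ * (n:ℝ) ^ (-θ))
    · intro hs
      have hne : c/2 * C₁ ≠ 0 := by positivity
      have : Summable (fun n : ℕ => (n:ℝ) ^ (-θ)) := by
        have := hs.div_const (c/2 * C₁)
        apply this.congr
        intro n
        field_simp
      rw [Real.summable_nat_rpow] at this
      linarith
    · filter_upwards [eventually_ge_atTop 1] with n hn1
      refine ⟨by positivity, ?_⟩
      have := (hγ n hn1).1
      nlinarith [Real.rpow_nonneg (Nat.cast_nonneg n : (0:ℝ) ≤ (n:ℝ)) (-θ)]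
  · -- smallness of the error terms
    intro ε hε
    have hq : 0 < θ + η - 1 := by linarith
    have hub : Tendsto (fun n : ℕ => c₃ * C₂ * ((n:ℝ) + 1) ^ p * (n:ℝ) ^ (-θ)) atTop (nhds 0) := by
      apply squeeze_zero' (g := fun n : ℕ => c₃ * C₂ * 2 ^ p * (n:ℝ) ^ (-(θ + η - 1)))
      · filter_upwards with n
        positivity
      · filter_upwards [eventually_ge_atTop 1] with n hn1
        have hn0 : (0:ℝ) < (n:ℝ) := by exact_mod_cast Nat.lt_of_lt_of_le Nat.zero_lt_one hn1
        have hn1' : (1:ℝ) ≤ (n:ℝ) := by exact_mod_cast hn1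
        have h1 : ((n:ℝ) + 1) ^ p ≤ (2 * (n:ℝ)) ^ p := by
          apply Real.rpow_le_rpow (by positivity) (by linarith) hp0.le
        have h2 : (2 * (n:ℝ)) ^ p = 2 ^ p * (n:ℝ) ^ p :=
          Real.mul_rpow (by norm_num) hn0.le
        have h3 : (n:ℝ) ^ p * (n:ℝ) ^ (-θ) = (n:ℝ) ^ (-(θ + η - 1)) := by
          rw [← Real.rpow_add hn0]
          congr 1
          rw [hp]; ring
        have hrθ : (0:ℝ) ≤ (n:ℝ) ^ (-θ) := Real.rpow_nonneg hn0.le _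
        calc c₃ * C₂ * ((n:ℝ) + 1) ^ p * (n:ℝ) ^ (-θ)
            ≤ c₃ * C₂ * (2 ^ p * (n:ℝ) ^ p) * (n:ℝ) ^ (-θ) := by
              rw [← h2]
              apply mul_le_mul_of_nonneg_right (mul_le_mul_of_nonneg_left h1 (by positivity)) hrθ
          _ = c₃ * C₂ * 2 ^ p * ((n:ℝ) ^ p * (n:ℝ) ^ (-θ)) := by ring
          _ = c₃ * C₂ * 2 ^ p * (n:ℝ) ^ (-(θ + η - 1)) := by rw [h3]
      · simpa using ((hrpow0 _ hq).const_mul (c₃ * C₂ * 2 ^ p))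
    filter_upwards [hub.eventually_lt_const (by positivity : (0:ℝ) < ε * c / 2),
      eventually_ge_atTop 1] with n h1 hn1
    have hγ0 := (hγpos n hn1).le
    have hγle := (hγ n hn1).2
    have hnp1 : (0:ℝ) ≤ ((n:ℝ) + 1) ^ p := Real.rpow_nonneg (by positivity) _
    have hkey : c₃ * ((n:ℝ) + 1) ^ p * γ n ≤ ε * c / 2 := by
      calc c₃ * ((n:ℝ) + 1) ^ p * γ n ≤ c₃ * ((n:ℝ) + 1) ^ p * (C₂ * (n:ℝ) ^ (-θ)) := by
            apply mul_le_mul_of_nonneg_left hγle (by positivity)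
        _ = c₃ * C₂ * ((n:ℝ) + 1) ^ p * (n:ℝ) ^ (-θ) := by ring
        _ ≤ ε * c / 2 := h1.le
    calc c₃ * ((n:ℝ) + 1) ^ p * γ n ^ 2 = (c₃ * ((n:ℝ) + 1) ^ p * γ n) * γ n := by ring
      _ ≤ (ε * c / 2) * γ n := mul_le_mul_of_nonneg_right hkey hγ0
      _ = ε * (c/2 * γ n) := by ring
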